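/- Let N ≥ 1, τc ≠ 0, τ0 ≠ 0, τ1 real, D = 2τ1 + τ0 - τc, and assume τ0 ≠ D and τ0 ≠ τc/N + D. Define f(R) = (1/2)·tr(L_c·F(τ1)·C(R)·F(τ0)·C(R)·F(τ1)) as above, R1 = 2/(τ0-D) - 2/τ0 and R2 = 2/(τ0 - τc/N - D). Then f(R) = 1 if and only if R = R1 or R = R2, and f(R) = -1 if and only if R = R1 + 2/τ0 or R = R2 - 2/τ0. -/

import Mathlib

set_option maxHeartbeats 1000000

theorem stmt_12 (N : ℕ) (hN : 1 ≤ N) (τc τ0 τ1 : ℝ) (hτc : τc ≠ 0) (hτ0 : τ0 ≠ 0)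
    (h1 : τ0 ≠ 2 * τ1 + τ0 - τc)
    (h2 : τ0 ≠ τc / N + (2 * τ1 + τ0 - τc)) :
    ∀ R : ℝ,
      ((1 / 2) * Matrix.trace
          (!![1 - 2 * (N : ℝ), ((N : ℝ) - 1) * τc; 4 * (N : ℝ) / τc, 1 - 2 * (N : ℝ)] *
            !![(1 : ℝ), τ1; 0, 1] * !![(1 : ℝ), 0; R, 1] * !![(1 : ℝ), τ0; 0, 1] *
            !![(1 : ℝ), 0; R, 1] * !![(1 : ℝ), τ1; 0, 1]) = 1
        ↔ (R = 2 / (τ0 - (2 * τ1 + τ0 - τc)) - 2 / τ0 ∨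
           R = 2 / (τ0 - τc / N - (2 * τ1 + τ0 - τc))))
      ∧
      ((1 / 2) * Matrix.trace
          (!![1 - 2 * (N : ℝ), ((N : ℝ) - 1) * τc; 4 * (N : ℝ) / τc, 1 - 2 * (N : ℝ)] *
            !![(1 : ℝ), τ1; 0, 1] * !![(1 : ℝ), 0; R, 1] * !![(1 : ℝ), τ0; 0, 1] *
            !![(1 : ℝ), 0; R, 1] * !![(1 : ℝ), τ1; 0, 1]) = -1
        ↔ (R = 2 / (τ0 - (2 * τ1 + τ0 - τc)) - 2 / τ0 + 2 / τ0 ∨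
           R = 2 / (τ0 - τc / N - (2 * τ1 + τ0 - τc)) - 2 / τ0)) := by
  intro R
  have hN' : (N : ℝ) ≠ 0 := Nat.cast_ne_zero.mpr (by omega)
  have hA : τc - 2 * τ1 ≠ 0 := by
    intro h; apply h1; linarith [h]
  have hB : (N : ℝ) * τc - τc - 2 * N * τ1 ≠ 0 := by
    intro h; apply h2
    field_simp
    linarith [h]
  set k : ℝ := τ0 * (τc - 2 * τ1) * ((N : ℝ) * τc - τc - 2 * N * τ1) / (2 * τc) with hk
  have hkne : k ≠ 0 := by
    rw [hk]
    exact div_ne_zero (mul_ne_zero (mul_ne_zero hτ0 hA) hB) (by positivity)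
  set R1 : ℝ := 2 / (τ0 - (2 * τ1 + τ0 - τc)) - 2 / τ0 with hR1
  set R2 : ℝ := 2 / (τ0 - τc / N - (2 * τ1 + τ0 - τc)) with hR2
  set f : ℝ := (1 / 2) * Matrix.trace
      (!![1 - 2 * (N : ℝ), ((N : ℝ) - 1) * τc; 4 * (N : ℝ) / τc, 1 - 2 * (N : ℝ)] *
        !![(1 : ℝ), τ1; 0, 1] * !![(1 : ℝ), 0; R, 1] * !![(1 : ℝ), τ0; 0, 1] *
        !![(1 : ℝ), 0; R, 1] * !![(1 : ℝ), τ1; 0, 1]) with hf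
  have hdenA : τ0 - (2 * τ1 + τ0 - τc) ≠ 0 := by intro h; exact hA (by linarith)
  have hdenB : τ0 - τc / N - (2 * τ1 + τ0 - τc) ≠ 0 := by
    intro h; apply hB
    have : τc / N = τc - 2 * τ1 := by linarith
    field_simp at this
    linarith
  have e1 : R1 = 2 / (τc - 2 * τ1) - 2 / τ0 := by rw [hR1]; ring_nf
  have e2 : R2 = 2 * N / ((N : ℝ) * τc - τc - 2 * N * τ1) := by
    rw [hR2]
    rw [div_eq_div_iff hdenB hB]
    field_simp
    ring
  have hfval : f = k * (R - R1) * (R - R2) + 1 ∧ f = k * (R - R1 - 2 / τ0) * (R - R2 + 2 / τ0) - 1 := by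
    rw [hf, hk, e1, e2]
    simp only [Matrix.trace_fin_two, Matrix.mul_apply, Fin.sum_univ_succ, Fin.sum_univ_zero,
      Matrix.cons_val_zero, Matrix.cons_val_one, Matrix.head_cons, Matrix.cons_val', Matrix.head_fin_const,
      Matrix.empty_val', Matrix.cons_val_fin_one, Matrix.of_apply, Matrix.cons_val_succ, Fin.succ_zero_eq_one]
    constructor <;> · set D := (N:ℝ) * τc - τc - 2 * N * τ1 with hD; field_simp; rw [hD]; ring
  constructor
  · rw [hfval.1]
    constructor
    · intro h
      have h0 : k * (R - R1) * (R - R2) = 0 := by linarith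
      rcases mul_eq_zero.mp h0 with h' | h'
      · rcases mul_eq_zero.mp h' with h'' | h''
        · exact absurd h'' hkne
        · exact Or.inl (by linarith)
      · exact Or.inr (by linarith)
    · rintro (h | h) <;> rw [h] <;> ring
  · rw [hfval.2]
    constructor
    · intro h
      have h0 : k * (R - R1 - 2 / τ0) * (R - R2 + 2 / τ0) = 0 := by linarith
      rcases mul_eq_zero.mp h0 with h' | h'
      · rcases mul_eq_zero.mp h' with h'' | h''
        · exact absurd h'' hkne
        · exact Or.inl (by linarith)
      · exact Or.inr (by linarith)
    · rintro (h | h) <;> rw [h] <;> ring
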